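/- Let v* be the optimal solution of the quadratic program minimizing (1/2) vᵀ Σ v − bᵀ v over {v : Qv ≥ 0}, where Σ is a symmetric positive definite m×m matrix, b ∈ ℝ^m, and Q is an n×m matrix. If there exists v₀ with Qv₀ ≥ 0 and bᵀv₀ > 0, then v* ≠ 0 and bᵀ v* = (v*)ᵀ Σ v* > 0. -/

import Mathlib

open Matrix

/-- If `v*` minimizes `(1/2) vᵀ Σ v − bᵀ v` over the cone `{v : Qv ≥ 0}`, where `Σ` is
symmetric positive definite, and there is a feasible `v₀` with `bᵀv₀ > 0`, then `v* ≠ 0`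
and `bᵀ v* = (v*)ᵀ Σ v* > 0`. -/
theorem stmt_2 {m n : ℕ} (S : Matrix (Fin m) (Fin m) ℝ) (hSsymm : S.IsSymm)
    (hSpd : S.PosDef) (b : Fin m → ℝ) (Q : Matrix (Fin n) (Fin m) ℝ)
    (v₀ : Fin m → ℝ) (hv₀feas : ∀ i, 0 ≤ Q.mulVec v₀ i) (hbv₀ : 0 < b ⬝ᵥ v₀)
    (vstar : Fin m → ℝ) (hfeas : ∀ i, 0 ≤ Q.mulVec vstar i)
    (hmin : ∀ v : Fin m → ℝ, (∀ i, 0 ≤ Q.mulVec v i) →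
      (1 / 2) * (vstar ⬝ᵥ S.mulVec vstar) - b ⬝ᵥ vstar ≤
        (1 / 2) * (v ⬝ᵥ S.mulVec v) - b ⬝ᵥ v) :
    vstar ≠ 0 ∧ b ⬝ᵥ vstar = vstar ⬝ᵥ S.mulVec vstar ∧ 0 < b ⬝ᵥ vstar := by
  set q : ℝ := vstar ⬝ᵥ S.mulVec vstar with hq
  set β : ℝ := b ⬝ᵥ vstar with hβ
  set q0 : ℝ := v₀ ⬝ᵥ S.mulVec v₀ with hq0
  set β0 : ℝ := b ⬝ᵥ v₀ with hβ0
  have hv₀ne : v₀ ≠ 0 := by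
    intro h
    rw [hβ0, h] at hbv₀
    simp [dotProduct] at hbv₀
  have hq0pos : 0 < q0 := by
    have := hSpd.dotProduct_mulVec_pos hv₀ne
    simpa [hq0, dotProduct, Finset.mul_sum, mul_comm] using this
  -- feasibility of scalar multiples
  have hscale : ∀ (t : ℝ) (v : Fin m → ℝ), 0 ≤ t → (∀ i, 0 ≤ Q.mulVec v i) →
      ∀ i, 0 ≤ Q.mulVec (t • v) i := by
    intro t v ht hv i
    rw [Matrix.mulVec_smul]
    exact mul_nonneg ht (hv i)
  have hval : ∀ (t : ℝ) (v : Fin m → ℝ),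
      (1 / 2) * ((t • v) ⬝ᵥ S.mulVec (t • v)) - b ⬝ᵥ (t • v)
        = (t ^ 2 / 2) * (v ⬝ᵥ S.mulVec v) - t * (b ⬝ᵥ v) := by
    intro t v
    simp only [Matrix.mulVec_smul, smul_dotProduct, dotProduct_smul,
      smul_eq_mul]
    ring
  -- compare with s • v₀ for s = β0 / q0
  have hneg : (1 / 2) * q - β < 0 := by
    have h := hmin ((β0 / q0) • v₀) (hscale _ _ (le_of_lt (div_pos hbv₀ hq0pos)) hv₀feas)
    rw [hval] at h
    have : (β0 / q0) ^ 2 / 2 * q0 - β0 / q0 * β0 = - (β0 ^ 2 / (2 * q0)) := by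
      field_simp; ring
    rw [this] at h
    have hpos : 0 < β0 ^ 2 / (2 * q0) := div_pos (pow_pos hbv₀ 2) (by linarith)
    linarith
  have hvne : vstar ≠ 0 := by
    intro h
    rw [hq, hβ, h] at hneg
    simp [dotProduct, Matrix.mulVec] at hneg
  have hqpos : 0 < q := by
    have := hSpd.dotProduct_mulVec_pos hvne
    simpa [hq, dotProduct, Finset.mul_sum, mul_comm] using this
  -- compare with (β/q) • vstar to get β = q
  have hβq : β = q := by
    have h := hmin ((β / q) • vstar)
      (hscale _ _ (le_of_lt (div_pos (by linarith) hqpos)) hfeas)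
    rw [hval] at h
    have h2 : (β / q) ^ 2 / 2 * q - β / q * β = - (β ^ 2 / (2 * q)) := by
      field_simp; ring
    rw [h2] at h
    have hq2 : (2 : ℝ) * q ≠ 0 := by positivity
    have h4 : (1 / 2 * q - β) * (2 * q) ≤ -(β ^ 2 / (2 * q)) * (2 * q) :=
      mul_le_mul_of_nonneg_right h (by linarith)
    rw [neg_mul, div_mul_cancel₀ _ hq2] at h4
    have h5 : (q - β) ^ 2 = 0 := le_antisymm (by nlinarith) (sq_nonneg _)
    have h6 : q - β = 0 := by
      exact pow_eq_zero_iff (two_ne_zero) |>.mp h5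
    linarith
  exact ⟨hvne, hβq, by linarith⟩
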